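/- Let X be a real Banach space and D ⊆ X a bounded, closed, convex set containing at least two points. Then H(D, D') ≤ δ(D) − 2·r'(D) ≤ 2·(r(D) − r'(D)), where H denotes the Hausdorff distance. -/

import Mathlib

open Metric Set Bornology

variable {X : Type*}

/-- `frad A x` is r(A,x) = sup of distances from x to points of A. -/
noncomputable def frad [NormedAddCommGroup X] (A : Set X) (x : X) : ℝ :=
  sSup ((fun a => dist x a) '' A)

/-- `rad A` is the (Chebyshev) radius r(A) = inf over x in the space of r(A,x). -/
noncomputable def rad [NormedAddCommGroup X] (A : Set X) : ℝ :=
  sInf (Set.range fun x => frad A x)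

/-- `selfRad A` is the self-radius r(A,A) = inf over x ∈ A of r(A,x). -/
noncomputable def selfRad [NormedAddCommGroup X] (A : Set X) : ℝ :=
  sInf ((fun x => frad A x) '' A)

/-- The ball intersection D' of D. -/
noncomputable def ballInt [NormedAddCommGroup X] (D : Set X) : Set X :=
  ⋂ x ∈ D, closedBall x (Metric.diam D)

/-- The ball hull D^c of D. -/
noncomputable def ballHull [NormedAddCommGroup X] (D : Set X) : Set X :=
  ⋂ x ∈ {y : X | D ⊆ closedBall y (Metric.diam D)}, closedBall x (Metric.diam D)

/-- A set is diametrically maximal (complete) if adjoining any outside point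
increases the diameter. -/
def IsDM [NormedAddCommGroup X] (C : Set X) : Prop :=
  ∀ x ∉ C, Metric.diam C < Metric.diam (insert x C)

/-- `C` is a completion of `D`: a diametrically maximal set containing `D`
with the same diameter. -/
def IsCompletion [NormedAddCommGroup X] (D C : Set X) : Prop :=
  IsDM C ∧ D ⊆ C ∧ Metric.diam C = Metric.diam D

/-- `irad' D d` is r'(D,d) = inf of distances from d to points outside D. -/
noncomputable def irad' [NormedAddCommGroup X] (D : Set X) (d : X) : ℝ :=
  sInf ((fun x => dist x d) '' Dᶜ)

/-- `irad D` is the inner radius r'(D) = sup over d ∈ D of r'(D,d). -/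
noncomputable def irad [NormedAddCommGroup X] (D : Set X) : ℝ :=
  sSup ((fun d => irad' D d) '' D)

section Aux
variable [NormedAddCommGroup X] [NormedSpace ℝ X]

lemma irad'_nonneg (D : Set X) (d : X) : 0 ≤ irad' D d :=
  Real.sInf_nonneg (by rintro _ ⟨x, -, rfl⟩; exact dist_nonneg)

lemma ball_subset_of_irad' (D : Set X) (d : X) : Metric.ball d (irad' D d) ⊆ D := by
  intro x hx
  by_contra hxD
  have h1 : irad' D d ≤ dist x d :=
    csInf_le ⟨0, by rintro _ ⟨z, -, rfl⟩; exact dist_nonneg⟩ ⟨x, hxD, rfl⟩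
  exact absurd (mem_ball.mp hx) (not_lt.mpr h1)

lemma closedBall_subset_of_irad' (D : Set X) (hDcl : IsClosed D) {d : X} (hd : d ∈ D) :
    Metric.closedBall d (irad' D d) ⊆ D := by
  rcases (irad'_nonneg D d).lt_or_eq with h | h
  · have hc : Metric.closedBall d (irad' D d) = closure (ball d (irad' D d)) :=
      (closure_ball d (ne_of_gt h)).symm
    rw [hc]
    calc closure (ball d (irad' D d)) ⊆ closure D :=
          closure_mono (ball_subset_of_irad' D d)
      _ = D := hDcl.closure_eq
  · intro x hx
    rw [mem_closedBall, ← h] at hx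
    have : x = d := dist_eq_zero.mp (le_antisymm hx dist_nonneg)
    rwa [this]

lemma two_irad'_le_diam (D : Set X) (hDb : IsBounded D) (hDcl : IsClosed D)
    {d : X} (hd : d ∈ D) : 2 * irad' D d ≤ Metric.diam D := by
  rcases (irad'_nonneg D d).lt_or_eq with h | h
  swap
  · rw [← h]; simpa using Metric.diam_nonneg
  · set ρ := irad' D d with hρ
    have hball := closedBall_subset_of_irad' D hDcl hd
    by_cases hX : ∃ v : X, v ≠ 0
    · obtain ⟨v, hv⟩ := hX
      have hvn : ‖v‖ ≠ 0 := norm_ne_zero_iff.mpr hv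
      set u := (ρ / ‖v‖) • v with hu
      have hun : ‖u‖ = ρ := by
        rw [hu, norm_smul, Real.norm_of_nonneg (by positivity)]
        field_simp
      have h1 : d + u ∈ D := hball (by
        simp only [mem_closedBall, dist_eq_norm, add_sub_cancel_left, hun, hρ.le, le_refl])
      have h2 : d - u ∈ D := hball (by
        simp only [mem_closedBall, dist_eq_norm, sub_sub_cancel_left, norm_neg, hun, hρ.le, le_refl])
      have hdd := Metric.dist_le_diam_of_mem hDb h1 h2
      rw [dist_eq_norm] at hdd
      have he : d + u - (d - u) = (2:ℝ) • u := by module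
      rw [he, norm_smul] at hdd
      simpa [hun] using hdd
    · push_neg at hX
      exfalso
      have hce : Dᶜ = ∅ := by
        ext x; simp only [mem_compl_iff, mem_empty_iff_false, iff_false, not_not]
        rw [hX x, ← hX d]; exact hd
      have : irad' D d = 0 := by rw [irad', hce]; simp
      linarith

lemma key_infDist (D : Set X) (hDb : IsBounded D) (hDcl : IsClosed D)
    {y : X} (hy : y ∈ ballInt D) {d : X} (hd : d ∈ D) :
    Metric.infDist y D ≤ Metric.diam D - 2 * irad' D d := by
  set ρ := irad' D d with hρdef
  have hρ0 : 0 ≤ ρ := irad'_nonneg D d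
  have hball := closedBall_subset_of_irad' D hDcl hd
  have hy' : ∀ w ∈ D, dist y w ≤ Metric.diam D := fun w hw => mem_iInter₂.mp hy w hw
  by_cases hc : dist y d ≤ ρ
  · have hyD : y ∈ D := hball hc
    rw [Metric.infDist_zero_of_mem hyD]
    have := two_irad'_le_diam D hDb hDcl hd
    linarith
  · push_neg at hc
    have hnd : ‖y - d‖ = dist y d := (dist_eq_norm y d).symm
    have hpos : 0 < ‖y - d‖ := by rw [hnd]; linarith
    set c := ρ / ‖y - d‖ with hcdef
    have hc0 : 0 ≤ c := by positivity
    have hcn : c * ‖y - d‖ = ρ := by rw [hcdef]; field_simp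
    have hnorm : ‖c • (y - d)‖ = ρ := by
      rw [norm_smul, Real.norm_of_nonneg hc0, hcn]
    have hzD : d + c • (y - d) ∈ D := hball (by
      simp only [mem_closedBall, dist_eq_norm, add_sub_cancel_left, hnorm, hρdef.le, le_refl])
    have hwD : d - c • (y - d) ∈ D := hball (by
      simp only [mem_closedBall, dist_eq_norm, sub_sub_cancel_left, norm_neg, hnorm, hρdef.le, le_refl])
    have hyw : dist y (d - c • (y - d)) = ‖y - d‖ + ρ := by
      rw [dist_eq_norm]
      have he : y - (d - c • (y - d)) = (1 + c) • (y - d) := by module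
      rw [he, norm_smul, Real.norm_of_nonneg (by linarith), add_mul, one_mul, hcn]
    have hyd_le : ‖y - d‖ + ρ ≤ Metric.diam D := by
      rw [← hyw]; exact hy' _ hwD
    have hc1 : c ≤ 1 := by
      rw [hcdef, div_le_one hpos, hnd]; linarith
    have hyz : dist y (d + c • (y - d)) = ‖y - d‖ - ρ := by
      rw [dist_eq_norm]
      have he : y - (d + c • (y - d)) = (1 - c) • (y - d) := by module
      rw [he, norm_smul, Real.norm_of_nonneg (by linarith), sub_mul, one_mul, hcn]
    calc Metric.infDist y D ≤ dist y (d + c • (y - d)) := Metric.infDist_le_dist_of_mem hzD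
      _ = ‖y - d‖ - ρ := hyz
      _ ≤ Metric.diam D - 2 * ρ := by linarith

end Aux

/-- H(D,D') ≤ δ(D) − 2r'(D) ≤ 2(r(D) − r'(D)). -/
theorem stmt2 [NormedAddCommGroup X] [NormedSpace ℝ X] [CompleteSpace X]
    (D : Set X) (hDb : IsBounded D) (hDcl : IsClosed D) (hDcv : Convex ℝ D)
    (hDnt : D.Nontrivial) :
    Metric.hausdorffDist D (ballInt D) ≤ Metric.diam D - 2 * irad D ∧
    Metric.diam D - 2 * irad D ≤ 2 * (rad D - irad D) := by
  obtain ⟨a, ha, b, hb, hab⟩ := hDnt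
  have hDne : D.Nonempty := ⟨a, ha⟩
  -- irad ≤ diam / 2
  have hirad_le : irad D ≤ Metric.diam D / 2 := by
    apply Real.sSup_le
    · rintro _ ⟨d, hd, rfl⟩
      have := two_irad'_le_diam D hDb hDcl hd
      linarith
    · have := Metric.diam_nonneg (s := D); linarith
  have hbddI : BddAbove ((fun d => irad' D d) '' D) := by
    refine ⟨Metric.diam D / 2, ?_⟩
    rintro _ ⟨d, hd, rfl⟩
    have := two_irad'_le_diam D hDb hDcl hd
    linarith
  have hirad0 : 0 ≤ irad D :=
    le_trans (irad'_nonneg D a) (le_csSup hbddI ⟨a, ha, rfl⟩)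
  have hnn : 0 ≤ Metric.diam D - 2 * irad D := by linarith
  have hsub : D ⊆ ballInt D := by
    intro x hx
    refine mem_iInter₂.mpr fun z hz => ?_
    exact Metric.dist_le_diam_of_mem hDb hx hz
  constructor
  · apply Metric.hausdorffDist_le_of_infDist hnn
    · intro x hx
      rw [Metric.infDist_zero_of_mem (hsub hx)]
      exact hnn
    · intro y hy
      have hkey : ∀ d ∈ D, Metric.infDist y D ≤ Metric.diam D - 2 * irad' D d :=
        fun d hd => key_infDist D hDb hDcl hy hd
      have hIle : irad D ≤ (Metric.diam D - Metric.infDist y D) / 2 := by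
        apply Real.sSup_le
        · rintro _ ⟨d, hd, rfl⟩
          have := hkey d hd
          linarith
        · have h1 : Metric.infDist y D ≤ dist y a := Metric.infDist_le_dist_of_mem ha
          have h2 : dist y a ≤ Metric.diam D := mem_iInter₂.mp hy a ha
          linarith
      linarith
  · -- diam D ≤ 2 * rad D
    have hfr : ∀ x : X, Metric.diam D ≤ 2 * frad D x := by
      intro x
      have hfnn : 0 ≤ frad D x :=
        Real.sSup_nonneg (by rintro _ ⟨z, hz, rfl⟩; exact dist_nonneg)
      apply Metric.diam_le_of_forall_dist_le (by linarith)
      intro p hp q hq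
      have hbdd : BddAbove ((fun z => dist x z) '' D) := by
        refine ⟨dist x a + Metric.diam D, ?_⟩
        rintro _ ⟨z, hz, rfl⟩
        have := Metric.dist_le_diam_of_mem hDb ha hz
        have := dist_triangle x a z
        linarith
      have h1 : dist x p ≤ frad D x := le_csSup hbdd ⟨p, hp, rfl⟩
      have h2 : dist x q ≤ frad D x := le_csSup hbdd ⟨q, hq, rfl⟩
      have := dist_triangle p x q
      rw [dist_comm p x] at this
      linarith
    have hrad : Metric.diam D / 2 ≤ rad D := by
      refine le_csInf ?_ ?_
      · exact ⟨frad D a, ⟨a, rfl⟩⟩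
      rintro _ ⟨x, rfl⟩
      have := hfr x
      linarith
    linarith
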